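/- Let k be a commutative ring and V = k^n with basis v_1,...,v_n. As left k[W_{n-1}]-modules, the submodule V^{⊗r} ⊗ v_n ⊆ V^{⊗(r+1)} is isomorphic to the direct sum over l = 1, ..., min(n, r+1) of S(r+1,l) copies of H_{n-1}(l-1), where S(r+1,l) is the number of set-partitions of {1,...,r+1} into exactly l nonempty blocks and H_{n-1}(m) is the k[W_{n-1}]-submodule of U^{⊗m} generated by v_{n-m} ⊗ ... ⊗ v_{n-1}, with U the span of v_1,...,v_{n-1}. -/

import Mathlib

noncomputable section

open Equiv

/-- The linear action of a group `G` on the free `k`-module `X → k` of functions,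
induced from a `G`-action on `X` by `(g • f) x = f (g⁻¹ • x)`. -/
def actEnd (k : Type) [CommRing k] (G : Type) [Group G] (X : Type) [MulAction G X] :
    G →* Module.End k (X → k) where
  toFun g := LinearMap.funLeft k k fun x => g⁻¹ • x
  map_one' := by
    ext f x
    simp
  map_mul' g₁ g₂ := by
    ext f x
    simp [mul_smul]

/-- The diagonal (value-permutation) action of the symmetric group `W_n` on
`V^{⊗r}` (`V = k^n`), modelled as the free `k`-module on multi-indices `Fin r → Fin n`;
on basis vectors, `w ⬝ (v_{i_1} ⊗ ⋯ ⊗ v_{i_r}) = v_{w i_1} ⊗ ⋯ ⊗ v_{w i_r}`. -/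
def permEnd (k : Type) [CommRing k] (n r : ℕ) :
    Equiv.Perm (Fin n) →* Module.End k ((Fin r → Fin n) → k) :=
  actEnd k (Equiv.Perm (Fin n)) (Fin r → Fin n)

/-- `Φ_{n,r} : k[W_n] → End_k(V^{⊗r})`. -/
def PhiAlg (k : Type) [CommRing k] (n r : ℕ) :
    MonoidAlgebra k (Equiv.Perm (Fin n)) →ₐ[k] Module.End k ((Fin r → Fin n) → k) :=
  MonoidAlgebra.lift k (Module.End k ((Fin r → Fin n) → k)) (Equiv.Perm (Fin n)) (permEnd k n r)

/-- The restriction of `Φ_{n,r}` to the group algebra of a subgroup `G ≤ W_n`. -/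
def PhiSub (k : Type) [CommRing k] (n r : ℕ) (G : Subgroup (Equiv.Perm (Fin n))) :
    MonoidAlgebra k ↥G →ₐ[k] Module.End k ((Fin r → Fin n) → k) :=
  MonoidAlgebra.lift k (Module.End k ((Fin r → Fin n) → k)) ↥G ((permEnd k n r).comp G.subtype)

/-- `W_{n-1} = {w ∈ W_n : w(n) = n}`, the stabilizer of the last basis vector. -/
def stabLast (n : ℕ) (hn : 0 < n) : Subgroup (Equiv.Perm (Fin n)) :=
  MulAction.stabilizer (Equiv.Perm (Fin n)) (⟨n - 1, Nat.sub_lt hn Nat.one_pos⟩ : Fin n)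

/-- `V(Λ)`: the span of the basis tensors whose multi-index has value-type `Λ`
(the value-type of a multi-index `i` is the set-partition `Setoid.ker i` by fibers). -/
def Vpart (k : Type) [CommRing k] (n r : ℕ) (Λ : Setoid (Fin r)) :
    Submodule k ((Fin r → Fin n) → k) :=
  Submodule.span k {f | ∃ i : Fin r → Fin n, Setoid.ker i = Λ ∧ f = Pi.single i 1}

/-- `V'(Λ')`: the span of the basis tensors `v_{i_1} ⊗ ⋯ ⊗ v_{i_r} ⊗ v_n`
whose multi-index `(i_1, …, i_r, n)` has value-type `Λ'`. -/
def Vpart' (k : Type) [CommRing k] (n r : ℕ) (hn : 0 < n) (Λ' : Setoid (Fin (r + 1))) :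
    Submodule k ((Fin (r + 1) → Fin n) → k) :=
  Submodule.span k {f | ∃ i : Fin (r + 1) → Fin n, Setoid.ker i = Λ' ∧
    i (Fin.last r) = (⟨n - 1, Nat.sub_lt hn Nat.one_pos⟩ : Fin n) ∧ f = Pi.single i 1}

/-- The submodule `V^{⊗r} ⊗ v_n ⊆ V^{⊗(r+1)}`. -/
def lastSub (k : Type) [CommRing k] (n r : ℕ) (hn : 0 < n) :
    Submodule k ((Fin (r + 1) → Fin n) → k) :=
  Submodule.span k {f | ∃ i : Fin (r + 1) → Fin n,
    i (Fin.last r) = (⟨n - 1, Nat.sub_lt hn Nat.one_pos⟩ : Fin n) ∧ f = Pi.single i 1}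

/-- The multi-index of the tensor `v_{n-l+1} ⊗ ⋯ ⊗ v_n`. -/
def baseIdx (n l : ℕ) (h : l ≤ n) : Fin l → Fin n :=
  fun α => ⟨n - l + α.1, by have := α.isLt; omega⟩

/-- `H_n(l)`: the `k[W_n]`-submodule of `V^{⊗l}` generated by `v_{n-l+1} ⊗ ⋯ ⊗ v_n`. -/
def Hmod (k : Type) [CommRing k] (n l : ℕ) (h : l ≤ n) :
    Submodule k ((Fin l → Fin n) → k) :=
  Submodule.span k
    (Set.range fun w : Equiv.Perm (Fin n) => permEnd k n l w (Pi.single (baseIdx n l h) 1))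

/-- The multi-index of the tensor `v_{n-m} ⊗ ⋯ ⊗ v_{n-1}` (inside `U = ⟨v_1, …, v_{n-1}⟩`). -/
def baseIdx' (n m : ℕ) (h : m < n) : Fin m → Fin n :=
  fun α => ⟨n - 1 - m + α.1, by have := α.isLt; omega⟩

/-- `H_{n-1}(m)`: the `k[W_{n-1}]`-submodule of `U^{⊗m}` generated by
`v_{n-m} ⊗ ⋯ ⊗ v_{n-1}`, where `U = ⟨v_1, …, v_{n-1}⟩`. -/
def Hprime (k : Type) [CommRing k] (n m : ℕ) (h : m < n) :
    Submodule k ((Fin m → Fin n) → k) :=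
  Submodule.span k
    (Set.range fun w : ↥(stabLast n (by omega)) =>
      permEnd k n m ↑w (Pi.single (baseIdx' n m h) 1))

/-- The Young subgroup `W_{(n-l,1^l)}` of permutations fixing each of the last `l` points. -/
def fixTop (n l : ℕ) : Subgroup (Equiv.Perm (Fin n)) where
  carrier := {w | ∀ j : Fin n, n - l ≤ (j : ℕ) → w j = j}
  one_mem' := by intro j _; rfl
  mul_mem' := by
    intro a b ha hb j hj
    simp only [Set.mem_setOf_eq] at ha hb
    rw [Equiv.Perm.mul_apply, hb j hj, ha j hj]
  inv_mem' := by
    intro a ha j hj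
    simp only [Set.mem_setOf_eq] at ha
    conv_lhs => rw [← ha j hj]
    exact Equiv.symm_apply_apply a j

/-- The index of the consecutive block (with block sizes `lam`) containing position `x`. -/
def blockIdx (lam : List ℕ) (x : ℕ) : ℕ :=
  ((List.range lam.length).filter fun t => (lam.take (t + 1)).sum ≤ x).length

/-- The Young subgroup `W_λ ≤ W_d`: permutations preserving each consecutive block
of sizes `λ_1, λ_2, …`. -/
def youngSubgroup (d : ℕ) (lam : List ℕ) : Subgroup (Equiv.Perm (Fin d)) where
  carrier := {w | ∀ j : Fin d, blockIdx lam ((w j : Fin d) : ℕ) = blockIdx lam (j : ℕ)}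
  one_mem' := by intro j; rfl
  mul_mem' := by
    intro a b ha hb j
    simp only [Set.mem_setOf_eq] at ha hb
    rw [Equiv.Perm.mul_apply, ha (b j), hb j]
  inv_mem' := by
    intro a ha j
    simp only [Set.mem_setOf_eq] at ha
    conv_rhs => rw [show j = a (a⁻¹ j) from (Equiv.apply_symm_apply a j).symm]
    rw [ha (a⁻¹ j)]

/-- `x_λ = Σ_{w ∈ W_λ} w ∈ k[W_d]`. -/
def xElt (k : Type) [CommRing k] (d : ℕ) (lam : List ℕ) :
    MonoidAlgebra k (Equiv.Perm (Fin d)) :=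
  letI := Classical.decPred (· ∈ youngSubgroup d lam)
  ∑ w ∈ Finset.univ.filter (· ∈ youngSubgroup d lam), MonoidAlgebra.single w (1 : k)

/-- `y_λ = Σ_{w ∈ W_λ} sgn(w) w ∈ k[W_d]`. -/
def yElt (k : Type) [CommRing k] (d : ℕ) (lam : List ℕ) :
    MonoidAlgebra k (Equiv.Perm (Fin d)) :=
  letI := Classical.decPred (· ∈ youngSubgroup d lam)
  ∑ w ∈ Finset.univ.filter (· ∈ youngSubgroup d lam),
    MonoidAlgebra.single w ((Equiv.Perm.sign w : ℤ) : k)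

/-- `y_λ = Σ_{w ∈ W_λ ∩ G} sgn(w) w`, as an element of the group algebra of a
subgroup `G ≤ W_d` (for `G = W_{n-1}` and `λ ⊢ n-1` this is the usual `y_λ ∈ k[W_{n-1}]`). -/
def yEltSub (k : Type) [CommRing k] {d : ℕ} (G : Subgroup (Equiv.Perm (Fin d)))
    (lam : List ℕ) : MonoidAlgebra k ↥G :=
  letI : Fintype ↥G := Fintype.ofFinite ↥G
  letI := Classical.decPred fun w : ↥G => (w : Equiv.Perm (Fin d)) ∈ youngSubgroup d lam
  ∑ w ∈ Finset.univ.filter (fun w : ↥G => (w : Equiv.Perm (Fin d)) ∈ youngSubgroup d lam),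
    MonoidAlgebra.single w ((Equiv.Perm.sign (w : Equiv.Perm (Fin d)) : ℤ) : k)

/-- The dominance order on partitions (as lists of parts): `lam ⊵ mu`. -/
def Dominates (lam mu : List ℕ) : Prop :=
  ∀ t : ℕ, (mu.take t).sum ≤ (lam.take t).sum

/-- The conjugate (transpose) partition: `μᵀ_i = #{j : μ_j ≥ i}`. -/
def conjList (mu : List ℕ) : List ℕ :=
  (List.range mu.headI).map fun i => (mu.filter fun p => i < p).length

/-- `lam` is a partition of `d`: positive parts, in weakly decreasing order, summing to `d`. -/
def IsPartitionList (d : ℕ) (lam : List ℕ) : Prop :=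
  (∀ p ∈ lam, 0 < p) ∧ lam.sum = d ∧ lam.Pairwise (· ≥ ·)

/-- The hook partition `α(d,r) = (d-r, 1^r)`. -/
def hookPartition (d r : ℕ) : List ℕ := (d - r) :: List.replicate r 1

/-- The representation of `k[W_d]` on the permutation module `M^λ`, the free `k`-module
on the left cosets `W_d / W_λ` with `W_d` acting by left translation. -/
def PhiQuot (k : Type) [CommRing k] (d : ℕ) (lam : List ℕ) :
    MonoidAlgebra k (Equiv.Perm (Fin d)) →ₐ[k]
      Module.End k ((Equiv.Perm (Fin d) ⧸ youngSubgroup d lam) → k) :=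
  MonoidAlgebra.lift k _ _
    (actEnd k (Equiv.Perm (Fin d)) (Equiv.Perm (Fin d) ⧸ youngSubgroup d lam))

/-- The representation of `k[G]` (for `G ≤ W_d`) on the permutation module on the
left cosets `G / (G ∩ W_λ)`. -/
def PhiQuotSub (k : Type) [CommRing k] {d : ℕ} (G : Subgroup (Equiv.Perm (Fin d)))
    (lam : List ℕ) :
    MonoidAlgebra k ↥G →ₐ[k]
      Module.End k ((↥G ⧸ Subgroup.comap G.subtype (youngSubgroup d lam)) → k) :=
  MonoidAlgebra.lift k _ _
    (actEnd k ↥G (↥G ⧸ Subgroup.comap G.subtype (youngSubgroup d lam)))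

/-- The Stirling number of the second kind `S(r,l)`: the number of set-partitions
of an `r`-element set into exactly `l` nonempty blocks. -/
def stirling (r l : ℕ) : ℕ :=
  Nat.card {Λ : Setoid (Fin r) // Nat.card (Quotient Λ) = l}

namespace Stmt10Aux

def lastE (n : ℕ) (hn : 0 < n) : Fin n := ⟨n - 1, Nat.sub_lt hn Nat.one_pos⟩

theorem permEnd_apply (k : Type) [CommRing k] (n m : ℕ) (w : Equiv.Perm (Fin n))
    (f : (Fin m → Fin n) → k) (i : Fin m → Fin n) :
    permEnd k n m w f i = f (fun a => w⁻¹ (i a)) := rfl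

theorem permEnd_single (k : Type) [CommRing k] (n m : ℕ) (w : Equiv.Perm (Fin n))
    (i : Fin m → Fin n) :
    permEnd k n m w (Pi.single i 1) = Pi.single (fun a => w (i a)) (1 : k) := by
  classical
  funext x
  rw [permEnd_apply]
  by_cases h : x = fun a => w (i a)
  · subst h
    simp only [Pi.single_eq_same]
    have : (fun a => w⁻¹ (w (i a))) = i := by funext a; simp
    rw [this, Pi.single_eq_same]
  · rw [Pi.single_eq_of_ne h, Pi.single_eq_of_ne]
    intro hc
    apply h
    funext a
    have := congrFun hc a
    rw [← this]; simp



def suppSub (k : Type) [CommRing k] (X : Type) (P : X → Prop) : Submodule k (X → k) where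
  carrier := {f | ∀ x, ¬ P x → f x = 0}
  add_mem' := by intro a b ha hb x hx; simp only [Pi.add_apply, ha x hx, hb x hx, add_zero]
  zero_mem' := by intro x hx; rfl
  smul_mem' := by intro c f hf x hx; simp only [Pi.smul_apply, hf x hx, smul_zero]

theorem mem_suppSub (k : Type) [CommRing k] {X : Type} {P : X → Prop} {f : X → k} :
    f ∈ suppSub k X P ↔ ∀ x, ¬ P x → f x = 0 := Iff.rfl

theorem span_singles (k : Type) [CommRing k] (X : Type) [Fintype X] [DecidableEq X]
    (P : X → Prop) :
    Submodule.span k {f : X → k | ∃ x, P x ∧ f = Pi.single x 1} = suppSub k X P := by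
  classical
  apply le_antisymm
  · rw [Submodule.span_le]
    rintro f ⟨x, hx, rfl⟩ y hy
    exact Pi.single_eq_of_ne (fun h : y = x => hy (h ▸ hx)) 1
  · intro f hf
    have h1 : f = ∑ x ∈ Finset.univ.filter P, f x • (Pi.single x 1 : X → k) := by
      have h2 : ∀ x : X, f x • (Pi.single x 1 : X → k) = Pi.single x (f x) := by
        intro x; funext y
        by_cases h : y = x
        · subst h; simp
        · simp [Pi.single_eq_of_ne h]
      rw [Finset.sum_congr rfl (fun x _ => h2 x)]
      rw [Finset.sum_filter_of_ne, Finset.univ_sum_single]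
      intro x _ hx
      by_contra hPx
      apply hx
      rw [hf x hPx]
      simp
    rw [h1]
    apply Submodule.sum_mem
    intro x hx
    apply Submodule.smul_mem
    apply Submodule.subset_span
    exact ⟨x, (Finset.mem_filter.mp hx).2, rfl⟩


theorem mem_lastSub (k : Type) [CommRing k] (n r : ℕ) (hn : 0 < n)
    {f : (Fin (r+1) → Fin n) → k} :
    f ∈ lastSub k n r hn ↔ ∀ i : Fin (r+1) → Fin n, ¬ i (Fin.last r) = lastE n hn → f i = 0 := by
  classical
  have : lastSub k n r hn = suppSub k _ (fun i : Fin (r+1) → Fin n => i (Fin.last r) = lastE n hn) :=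
    span_singles k _ _
  rw [this, mem_suppSub]

/-- extension of an injection avoiding `lastE` to a permutation fixing `lastE` -/
theorem exists_perm_ext (n m : ℕ) (hn : 0 < n) (u f : Fin m → Fin n)
    (hu : Function.Injective u) (hu2 : ∀ a, u a ≠ lastE n hn)
    (hf : Function.Injective f) (hf2 : ∀ a, f a ≠ lastE n hn) :
    ∃ w : Equiv.Perm (Fin n), w (lastE n hn) = lastE n hn ∧ ∀ a, w (f a) = u a := by
  classical
  set γ := {x : Fin n // x ≠ lastE n hn} with hγ
  let F : Fin m ↪ γ := ⟨fun a => ⟨f a, hf2 a⟩, fun a b h => hf (congrArg Subtype.val h)⟩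
  let G : Fin m ↪ γ := ⟨fun a => ⟨u a, hu2 a⟩, fun a b h => hu (congrArg Subtype.val h)⟩
  have hcard : Fintype.card ↥(Set.range ⇑F)ᶜ = Fintype.card ↥(Set.range ⇑G)ᶜ := by
    rw [Fintype.card_compl_set, Fintype.card_compl_set,
      Set.card_range_of_injective F.injective, Set.card_range_of_injective G.injective]
  let c : ↥(Set.range ⇑F)ᶜ ≃ ↥(Set.range ⇑G)ᶜ := Fintype.equivOfCardEq hcard
  let σ : Equiv.Perm γ :=
    (Equiv.Set.sumCompl (Set.range ⇑F)).symm.trans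
      ((Equiv.sumCongr (F.toEquivRange.symm.trans G.toEquivRange) c).trans
        (Equiv.Set.sumCompl (Set.range ⇑G)))
  have hσ : ∀ a, σ (F a) = G a := by
    intro a
    show ((Equiv.Set.sumCompl (Set.range ⇑F)).symm.trans
      ((Equiv.sumCongr (F.toEquivRange.symm.trans G.toEquivRange) c).trans
        (Equiv.Set.sumCompl (Set.range ⇑G)))) (F a) = G a
    rw [Equiv.trans_apply, Equiv.Set.sumCompl_symm_apply_of_mem (Set.mem_range_self a)]
    simp
  refine ⟨σ.extendDomain (Equiv.refl γ), ?_, ?_⟩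
  · rw [Equiv.Perm.extendDomain_apply_not_subtype]
    simp
  · intro a
    rw [Equiv.Perm.extendDomain_apply_subtype σ (Equiv.refl γ) (hf2 a)]
    have : (Equiv.refl γ).symm ⟨f a, hf2 a⟩ = F a := rfl
    rw [this, hσ a]
    rfl

theorem baseIdx'_inj (n m : ℕ) (h : m < n) : Function.Injective (baseIdx' n m h) := by
  intro a b hab
  have := congrArg Fin.val hab
  simp only [baseIdx'] at this
  exact Fin.ext (by omega)

theorem baseIdx'_ne (n m : ℕ) (h : m < n) (hn : 0 < n) (a : Fin m) :
    baseIdx' n m h a ≠ lastE n hn := by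
  intro hc
  have := congrArg Fin.val hc
  simp only [baseIdx', lastE] at this
  have := a.isLt
  omega

def Pm (n : ℕ) (hn : 0 < n) (m : ℕ) (u : Fin m → Fin n) : Prop :=
  Function.Injective u ∧ ∀ a, u a ≠ lastE n hn

theorem mem_Hprime (k : Type) [CommRing k] (n m : ℕ) (hm : m < n)
    {f : (Fin m → Fin n) → k} :
    f ∈ Hprime k n m hm ↔
      ∀ u : Fin m → Fin n, ¬ Pm n (by omega) m u → f u = 0 := by
  classical
  have hn : 0 < n := by omega
  have hset : (Set.range fun w : ↥(stabLast n (by omega)) =>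
      permEnd k n m ↑w (Pi.single (baseIdx' n m hm) 1))
      = {f : (Fin m → Fin n) → k | ∃ u, Pm n hn m u ∧ f = Pi.single u 1} := by
    ext g
    constructor
    · rintro ⟨w, rfl⟩
      refine ⟨fun a => (w : Equiv.Perm (Fin n)) (baseIdx' n m hm a), ⟨?_, ?_⟩, ?_⟩
      · intro a b hab
        exact baseIdx'_inj n m hm (w.1.injective hab)
      · intro a hc
        have hw : (w : Equiv.Perm (Fin n)) (lastE n hn) = lastE n hn := w.2
        have : baseIdx' n m hm a = lastE n hn := w.1.injective (by simp only at hc; rw [hc, hw])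
        exact baseIdx'_ne n m hm hn a this
      · exact permEnd_single k n m _ _
    · rintro ⟨u, ⟨hu1, hu2⟩, rfl⟩
      obtain ⟨w, hw1, hw2⟩ := exists_perm_ext n m hn u (baseIdx' n m hm) hu1 hu2
        (baseIdx'_inj n m hm) (baseIdx'_ne n m hm hn)
      refine ⟨⟨w, hw1⟩, ?_⟩
      show permEnd k n m w (Pi.single (baseIdx' n m hm) 1) = Pi.single u 1
      rw [permEnd_single]
      have : (fun a => w (baseIdx' n m hm a)) = u := funext hw2
      rw [this]
  rw [Hprime, hset, span_singles k _ (Pm n hn m), mem_suppSub]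

-- ## Setoid enumeration

theorem setoid_finite (α : Type) [Finite α] : Finite (Setoid α) :=
  Finite.of_injective (fun s : Setoid α => s.r)
    (fun a b h => by cases a; cases b; cases h; rfl)

theorem mk_eq_mk {α : Type} (s : Setoid α) (a b : α) :
    Quotient.mk s a = Quotient.mk s b ↔ s.r a b := ⟨Quotient.exact, Quotient.sound⟩

def setE (r l : ℕ) : Fin (stirling (r+1) (l+1)) ≃
    {Λ : Setoid (Fin (r+1)) // Nat.card (Quotient Λ) = l+1} := by
  letI : Finite (Setoid (Fin (r+1))) := setoid_finite _
  letI : Fintype {Λ : Setoid (Fin (r+1)) // Nat.card (Quotient Λ) = l+1} := Fintype.ofFinite _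
  exact (Fintype.equivFinOfCardEq (by rw [stirling]; exact Nat.card_eq_fintype_card.symm)).symm

def qlast (r : ℕ) (Λ : Setoid (Fin (r+1))) : Quotient Λ := Quotient.mk Λ (Fin.last r)

abbrev nonLast (r : ℕ) (Λ : Setoid (Fin (r+1))) : Type := {q : Quotient Λ // q ≠ qlast r Λ}

def blockE (r l : ℕ) (Λ : Setoid (Fin (r+1))) (h : Nat.card (Quotient Λ) = l+1) :
    nonLast r Λ ≃ Fin l := by
  letI : Fintype (Quotient Λ) := Fintype.ofFinite _
  letI : DecidableEq (Quotient Λ) := Classical.decEq _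
  refine Fintype.equivFinOfCardEq ?_
  have h1 : Fintype.card {q : Quotient Λ // q = qlast r Λ} = 1 := Fintype.card_subtype_eq _
  have h2 := Fintype.card_subtype_compl (fun q : Quotient Λ => q = qlast r Λ)
  have h3 : Nat.card (Quotient Λ) = Fintype.card (Quotient Λ) := Nat.card_eq_fintype_card
  show Fintype.card {q : Quotient Λ // ¬ q = qlast r Λ} = l
  omega

-- ## The index types and the bijection τ

def ΛOf (n r : ℕ) (l : Fin (min n (r+1))) (j : Fin (stirling (r+1) (l.1+1))) :
    Setoid (Fin (r+1)) := ((setE r l.1) j).val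

theorem ΛOf_card (n r : ℕ) (l : Fin (min n (r+1))) (j : Fin (stirling (r+1) (l.1+1))) :
    Nat.card (Quotient (ΛOf n r l j)) = l.1+1 := ((setE r l.1) j).2

def bE (n r : ℕ) (l : Fin (min n (r+1))) (j : Fin (stirling (r+1) (l.1+1))) :
    nonLast r (ΛOf n r l j) ≃ Fin l.1 := blockE r l.1 _ (ΛOf_card n r l j)

def AT (n r : ℕ) (hn : 0 < n) : Type :=
  {i : Fin (r+1) → Fin n // i (Fin.last r) = lastE n hn}

def ST (n r : ℕ) (hn : 0 < n) : Type :=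
  Σ l : Fin (min n (r+1)), Σ _j : Fin (stirling (r+1) (l.1+1)),
    {u : Fin l.1 → Fin n // Pm n hn l.1 u}

open Classical in
def τ (n r : ℕ) (hn : 0 < n) : ST n r hn → AT n r hn :=
  fun s => ⟨fun x => if h : (ΛOf n r s.1 s.2.1).r x (Fin.last r) then lastE n hn
      else s.2.2.val (bE n r s.1 s.2.1
        ⟨Quotient.mk _ x, fun hc => h ((mk_eq_mk _ _ _).mp hc)⟩),
    dif_pos ((ΛOf n r s.1 s.2.1).iseqv.refl _)⟩

theorem τ_val_rel (n r : ℕ) (hn : 0 < n) (s : ST n r hn) (x : Fin (r+1))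
    (hx : (ΛOf n r s.1 s.2.1).r x (Fin.last r)) :
    (τ n r hn s).val x = lastE n hn := dif_pos hx

theorem τ_val_not (n r : ℕ) (hn : 0 < n) (s : ST n r hn) (x : Fin (r+1))
    (hx : ¬ (ΛOf n r s.1 s.2.1).r x (Fin.last r)) :
    (τ n r hn s).val x = s.2.2.val (bE n r s.1 s.2.1
      ⟨Quotient.mk _ x, fun hc => hx ((mk_eq_mk _ _ _).mp hc)⟩) := dif_neg hx

theorem ker_τ (n r : ℕ) (hn : 0 < n) (s : ST n r hn) :
    Setoid.ker (τ n r hn s).val = ΛOf n r s.1 s.2.1 := by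
  set Λ := ΛOf n r s.1 s.2.1 with hΛ
  apply Setoid.ext
  intro x y
  show (τ n r hn s).val x = (τ n r hn s).val y ↔ Λ.r x y
  by_cases hx : Λ.r x (Fin.last r) <;> by_cases hy : Λ.r y (Fin.last r)
  · rw [τ_val_rel n r hn s x hx, τ_val_rel n r hn s y hy]
    simp only [true_iff, iff_true]
    exact Λ.iseqv.trans hx (Λ.iseqv.symm hy)
  · rw [τ_val_rel n r hn s x hx, τ_val_not n r hn s y hy]
    constructor
    · intro hc
      exact absurd hc.symm (s.2.2.2.2 _)
    · intro hc
      exact absurd (Λ.iseqv.trans (Λ.iseqv.symm hc) hx) hy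
  · rw [τ_val_not n r hn s x hx, τ_val_rel n r hn s y hy]
    constructor
    · intro hc
      exact absurd hc (s.2.2.2.2 _)
    · intro hc
      exact absurd (Λ.iseqv.trans hc hy) hx
  · rw [τ_val_not n r hn s x hx, τ_val_not n r hn s y hy]
    constructor
    · intro hc
      have h1 := s.2.2.2.1 hc
      have h2 := (bE n r s.1 s.2.1).injective h1
      have h3 : Quotient.mk Λ x = Quotient.mk Λ y := congrArg Subtype.val h2
      exact (mk_eq_mk _ _ _).mp h3
    · intro hc
      have h3 : Quotient.mk Λ x = Quotient.mk Λ y := (mk_eq_mk _ _ _).mpr hc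
      exact congrArg (fun q => s.2.2.val (bE n r s.1 s.2.1 q)) (Subtype.ext h3)

theorem τ_inj (n r : ℕ) (hn : 0 < n) : Function.Injective (τ n r hn) := by
  rintro ⟨l, j, u, hu⟩ ⟨l', j', u', hu'⟩ h
  have hval : (τ n r hn ⟨l, j, ⟨u, hu⟩⟩).val = (τ n r hn ⟨l', j', ⟨u', hu'⟩⟩).val :=
    congrArg Subtype.val h
  have hker : ΛOf n r l j = ΛOf n r l' j' := by
    rw [← ker_τ n r hn ⟨l, j, ⟨u, hu⟩⟩, ← ker_τ n r hn ⟨l', j', ⟨u', hu'⟩⟩, hval]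
  have hll : l = l' := by
    have h1 := ΛOf_card n r l j
    have h2 := ΛOf_card n r l' j'
    rw [hker] at h1
    exact Fin.ext (by omega)
  subst hll
  have hjj : j = j' := (setE r l.1).injective (Subtype.ext hker)
  subst hjj
  have huu : u = u' := by
    funext t
    set q := (bE n r l j).symm t with hq
    have hx : Quotient.mk (ΛOf n r l j) q.val.out = q.val := Quotient.out_eq _
    have hnr : ¬ (ΛOf n r l j).r q.val.out (Fin.last r) := by
      intro hc
      exact q.2 (by rw [← hx]; exact (mk_eq_mk _ _ _).mpr hc)
    have e1 := congrFun hval q.val.out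
    rw [τ_val_not n r hn ⟨l, j, ⟨u, hu⟩⟩ _ hnr, τ_val_not n r hn ⟨l, j, ⟨u', hu'⟩⟩ _ hnr] at e1
    have hsub : (⟨Quotient.mk (ΛOf n r l j) q.val.out,
        fun hc => hnr ((mk_eq_mk _ _ _).mp hc)⟩ : nonLast r (ΛOf n r l j)) = q :=
      Subtype.ext hx
    rw [hsub] at e1
    rw [hq, Equiv.apply_symm_apply] at e1
    exact e1
  subst huu
  rfl

theorem τ_surj (n r : ℕ) (hn : 0 < n) : Function.Surjective (τ n r hn) := by
  rintro ⟨i, hi⟩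
  set Λ := Setoid.ker i with hΛdef
  haveI : Nonempty (Quotient Λ) := ⟨Quotient.mk Λ (Fin.last r)⟩
  have hc1 : 0 < Nat.card (Quotient Λ) := Nat.card_pos
  have hcn : Nat.card (Quotient Λ) ≤ n := by
    have hinj : Function.Injective (Quotient.lift i (fun a b h => h)) := by
      refine Quotient.ind₂ ?_
      intro a b hab
      exact Quotient.sound hab
    have := Nat.card_le_card_of_injective _ hinj
    rwa [Nat.card_eq_fintype_card (α := Fin n), Fintype.card_fin] at this
  have hcr : Nat.card (Quotient Λ) ≤ r + 1 := by
    have hsurj : Function.Surjective (Quotient.mk Λ) := fun q => ⟨q.out, Quotient.out_eq q⟩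
    have := Nat.card_le_card_of_surjective _ hsurj
    rwa [Nat.card_eq_fintype_card (α := Fin (r+1)), Fintype.card_fin] at this
  set c := Nat.card (Quotient Λ) with hcdef
  have hlt : c - 1 < min n (r+1) := by omega
  set l : Fin (min n (r+1)) := ⟨c-1, hlt⟩ with hldef
  have hcc : Nat.card (Quotient Λ) = l.1 + 1 := by show c = c - 1 + 1; omega
  set j : Fin (stirling (r+1) (l.1+1)) := (setE r l.1).symm ⟨Λ, hcc⟩ with hjdef
  have hΛ : ΛOf n r l j = Λ := by
    show ((setE r l.1) ((setE r l.1).symm ⟨Λ, hcc⟩)).val = Λ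
    rw [Equiv.apply_symm_apply]
  have hrel : ∀ x y, (ΛOf n r l j).r x y ↔ i x = i y := by
    intro x y; rw [hΛ]; exact Iff.rfl
  set u : Fin l.1 → Fin n := fun t => i ((bE n r l j).symm t).val.out with hudef
  have hu : Pm n hn l.1 u := by
    constructor
    · intro t t' ht
      have h1 : (ΛOf n r l j).r ((bE n r l j).symm t).val.out ((bE n r l j).symm t').val.out :=
        (hrel _ _).mpr ht
      have h2 : ((bE n r l j).symm t).val = ((bE n r l j).symm t').val := by
        rw [← Quotient.out_eq ((bE n r l j).symm t).val, ← Quotient.out_eq ((bE n r l j).symm t').val]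
        exact (mk_eq_mk _ _ _).mpr h1
      have := (bE n r l j).symm.injective (Subtype.ext h2)
      exact this
    · intro t hc
      have h1 : i ((bE n r l j).symm t).val.out = i (Fin.last r) := by rw [hi]; exact hc
      have h2 : (ΛOf n r l j).r ((bE n r l j).symm t).val.out (Fin.last r) := (hrel _ _).mpr h1
      apply ((bE n r l j).symm t).2
      rw [← Quotient.out_eq ((bE n r l j).symm t).val]
      exact (mk_eq_mk _ _ _).mpr h2
  refine ⟨⟨l, j, ⟨u, hu⟩⟩, ?_⟩
  apply Subtype.ext
  funext x
  by_cases hx : (ΛOf n r l j).r x (Fin.last r)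
  · rw [τ_val_rel n r hn ⟨l, j, ⟨u, hu⟩⟩ x hx]
    show lastE n hn = i x
    rw [(hrel _ _).mp hx, hi]
  · rw [τ_val_not n r hn ⟨l, j, ⟨u, hu⟩⟩ x hx]
    have key := Equiv.symm_apply_apply (bE n r l j)
      (⟨Quotient.mk _ x, fun hc => hx ((mk_eq_mk _ _ _).mp hc)⟩ : nonLast r (ΛOf n r l j))
    have step : u ((bE n r l j) ⟨Quotient.mk _ x, fun hc => hx ((mk_eq_mk _ _ _).mp hc)⟩)
        = i (Quotient.mk (ΛOf n r l j) x).out :=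
      congrArg (fun z : nonLast r (ΛOf n r l j) => i z.val.out) key
    refine step.trans ?_
    apply (hrel _ _).mp
    apply (mk_eq_mk (ΛOf n r l j) _ _).mp
    rw [Quotient.out_eq]

-- ## Equivariance of τ

theorem Pm_smul (n : ℕ) (hn : 0 < n) (m : ℕ) (w : Equiv.Perm (Fin n))
    (hw : w (lastE n hn) = lastE n hn) (u : Fin m → Fin n) (hu : Pm n hn m u) :
    Pm n hn m (fun a => w⁻¹ (u a)) := by
  constructor
  · intro a b h
    exact hu.1 ((w⁻¹ : Equiv.Perm (Fin n)).injective h)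
  · intro a hc
    apply hu.2 a
    have h1 : u a = w (lastE n hn) := by
      rw [← hc]; exact (Equiv.apply_symm_apply w (u a)).symm
    rw [h1, hw]

theorem inv_fix (n : ℕ) (hn : 0 < n) (w : Equiv.Perm (Fin n))
    (hw : w (lastE n hn) = lastE n hn) : w⁻¹ (lastE n hn) = lastE n hn := by
  apply w.injective
  rw [← Equiv.Perm.mul_apply, mul_inv_cancel, Equiv.Perm.one_apply, hw]

theorem Pm_smul_iff (n : ℕ) (hn : 0 < n) (m : ℕ) (w : Equiv.Perm (Fin n))
    (hw : w (lastE n hn) = lastE n hn) (u : Fin m → Fin n) :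
    Pm n hn m (fun a => w⁻¹ (u a)) ↔ Pm n hn m u := by
  constructor
  · intro h
    have h2 := Pm_smul n hn m w⁻¹ (inv_fix n hn w hw) _ h
    have h3 : (fun a => (w⁻¹)⁻¹ (w⁻¹ (u a))) = u := by
      funext a; simp
    rwa [h3] at h2
  · exact Pm_smul n hn m w hw u

theorem τ_smul (n r : ℕ) (hn : 0 < n) (w : Equiv.Perm (Fin n))
    (hw : w (lastE n hn) = lastE n hn) (l : Fin (min n (r+1)))
    (j : Fin (stirling (r+1) (l.1+1))) (u : Fin l.1 → Fin n) (hu : Pm n hn l.1 u)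
    (x : Fin (r+1)) :
    w⁻¹ ((τ n r hn ⟨l, j, ⟨u, hu⟩⟩).val x)
      = (τ n r hn ⟨l, j, ⟨fun a => w⁻¹ (u a), Pm_smul n hn l.1 w hw u hu⟩⟩).val x := by
  by_cases hx : (ΛOf n r l j).r x (Fin.last r)
  · rw [τ_val_rel n r hn ⟨l, j, ⟨u, hu⟩⟩ x hx,
      τ_val_rel n r hn ⟨l, j, ⟨fun a => w⁻¹ (u a), Pm_smul n hn l.1 w hw u hu⟩⟩ x hx]
    exact inv_fix n hn w hw
  · rw [τ_val_not n r hn ⟨l, j, ⟨u, hu⟩⟩ x hx,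
      τ_val_not n r hn ⟨l, j, ⟨fun a => w⁻¹ (u a), Pm_smul n hn l.1 w hw u hu⟩⟩ x hx]

-- ## The linear equivalence

open Classical in
def eF (k : Type) [CommRing k] (n r : ℕ) (hn : 0 < n) :
    ↥(lastSub k n r hn) →ₗ[k]
      ((l : Fin (min n (r + 1))) → Fin (stirling (r + 1) (l.1 + 1)) →
        ↥(Hprime k n l.1 (Nat.lt_of_lt_of_le l.isLt (Nat.min_le_left _ _)))) where
  toFun x l j := ⟨fun u => if h : Pm n hn l.1 u then (x : (Fin (r+1) → Fin n) → k)
        (τ n r hn ⟨l, j, ⟨u, h⟩⟩).val else 0,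
    by rw [mem_Hprime]; intro u hu'; rw [dif_neg hu']⟩
  map_add' x y := by
    classical
    funext l j
    apply Subtype.ext
    funext u
    show (if h : Pm n hn l.1 u then
        ((x : (Fin (r+1) → Fin n) → k) + (y : (Fin (r+1) → Fin n) → k))
          (τ n r hn ⟨l, j, ⟨u, h⟩⟩).val else 0)
      = (if h : Pm n hn l.1 u then (x : (Fin (r+1) → Fin n) → k)
          (τ n r hn ⟨l, j, ⟨u, h⟩⟩).val else 0)
        + (if h : Pm n hn l.1 u then (y : (Fin (r+1) → Fin n) → k)
          (τ n r hn ⟨l, j, ⟨u, h⟩⟩).val else 0)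
    by_cases h : Pm n hn l.1 u
    · rw [dif_pos h, dif_pos h, dif_pos h]; rfl
    · rw [dif_neg h, dif_neg h, dif_neg h, add_zero]
  map_smul' c x := by
    classical
    funext l j
    apply Subtype.ext
    funext u
    show (if h : Pm n hn l.1 u then (c • (x : (Fin (r+1) → Fin n) → k))
          (τ n r hn ⟨l, j, ⟨u, h⟩⟩).val else 0)
      = c • (if h : Pm n hn l.1 u then (x : (Fin (r+1) → Fin n) → k)
          (τ n r hn ⟨l, j, ⟨u, h⟩⟩).val else 0)
    by_cases h : Pm n hn l.1 u
    · rw [dif_pos h, dif_pos h]; rfl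
    · rw [dif_neg h, dif_neg h, smul_zero]

def τE (n r : ℕ) (hn : 0 < n) : ST n r hn ≃ AT n r hn :=
  Equiv.ofBijective (τ n r hn) ⟨τ_inj n r hn, τ_surj n r hn⟩

open Classical in
def eInvF (k : Type) [CommRing k] (n r : ℕ) (hn : 0 < n)
    (y : (l : Fin (min n (r + 1))) → Fin (stirling (r + 1) (l.1 + 1)) →
        ↥(Hprime k n l.1 (Nat.lt_of_lt_of_le l.isLt (Nat.min_le_left _ _)))) : ↥(lastSub k n r hn) :=
  ⟨fun i => if h : i (Fin.last r) = lastE n hn then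
      (fun s : ST n r hn => (y s.1 s.2.1 : (Fin s.1.1 → Fin n) → k) s.2.2.val)
        ((τE n r hn).symm ⟨i, h⟩)
    else 0,
  by rw [mem_lastSub]; intro i hi; rw [dif_neg hi]⟩

def eEquiv (k : Type) [CommRing k] (n r : ℕ) (hn : 0 < n) :
    ↥(lastSub k n r hn) ≃ₗ[k]
      ((l : Fin (min n (r + 1))) → Fin (stirling (r + 1) (l.1 + 1)) →
        ↥(Hprime k n l.1 (Nat.lt_of_lt_of_le l.isLt (Nat.min_le_left _ _)))) :=
  { eF k n r hn with
    invFun := eInvF k n r hn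
    left_inv := by
      classical
      intro x
      apply Subtype.ext
      funext i
      show (if h : i (Fin.last r) = lastE n hn then
          (fun s : ST n r hn =>
            (eF k n r hn x s.1 s.2.1 : (Fin s.1.1 → Fin n) → k) s.2.2.val)
            ((τE n r hn).symm ⟨i, h⟩)
        else 0) = (x : (Fin (r+1) → Fin n) → k) i
      by_cases h : i (Fin.last r) = lastE n hn
      · rw [dif_pos h]
        set s := (τE n r hn).symm ⟨i, h⟩ with hs
        show (if h' : Pm n hn s.1.1 s.2.2.val then (x : (Fin (r+1) → Fin n) → k)
            (τ n r hn ⟨s.1, s.2.1, ⟨s.2.2.val, h'⟩⟩).val else 0) = _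
        rw [dif_pos s.2.2.2]
        have h1 : (⟨s.1, s.2.1, ⟨s.2.2.val, s.2.2.2⟩⟩ : ST n r hn) = s := rfl
        rw [h1]
        have h2 : τ n r hn s = ⟨i, h⟩ := Equiv.apply_symm_apply (τE n r hn) ⟨i, h⟩
        exact congrArg (fun z : AT n r hn => (x : (Fin (r+1) → Fin n) → k) z.val) h2
      · rw [dif_neg h]
        exact ((mem_lastSub k n r hn).mp x.2 i h).symm
    right_inv := by
      classical
      intro y
      funext l j
      apply Subtype.ext
      funext u
      show (if h : Pm n hn l.1 u then
          ((eInvF k n r hn y : ↥(lastSub k n r hn)) : (Fin (r+1) → Fin n) → k)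
            (τ n r hn ⟨l, j, ⟨u, h⟩⟩).val else 0)
        = (y l j : (Fin l.1 → Fin n) → k) u
      by_cases h : Pm n hn l.1 u
      · rw [dif_pos h]
        show (if h' : (τ n r hn ⟨l, j, ⟨u, h⟩⟩).val (Fin.last r) = lastE n hn then
            (fun s : ST n r hn => (y s.1 s.2.1 : (Fin s.1.1 → Fin n) → k) s.2.2.val)
              ((τE n r hn).symm ⟨(τ n r hn ⟨l, j, ⟨u, h⟩⟩).val, h'⟩)
          else 0) = _
        rw [dif_pos (τ n r hn ⟨l, j, ⟨u, h⟩⟩).2]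
        have h1 : (⟨(τ n r hn ⟨l, j, ⟨u, h⟩⟩).val, (τ n r hn ⟨l, j, ⟨u, h⟩⟩).2⟩ : AT n r hn)
            = τE n r hn ⟨l, j, ⟨u, h⟩⟩ := rfl
        rw [h1]
        exact congrArg (fun s : ST n r hn => (y s.1 s.2.1 : (Fin s.1.1 → Fin n) → k) s.2.2.val)
          (Equiv.symm_apply_apply (τE n r hn) ⟨l, j, ⟨u, h⟩⟩)
      · rw [dif_neg h]
        exact ((mem_Hprime k n l.1 (Nat.lt_of_lt_of_le l.isLt (Nat.min_le_left _ _))).mp (y l j).2 u h).symm }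

theorem smul_mem_lastSub (k : Type) [CommRing k] (n r : ℕ) (hn : 0 < n)
    (w : ↥(stabLast n hn)) (v : (Fin (r + 1) → Fin n) → k)
    (hv : v ∈ lastSub k n r hn) : permEnd k n (r + 1) ↑w v ∈ lastSub k n r hn := by
  rw [mem_lastSub] at hv ⊢
  intro i hi
  rw [permEnd_apply]
  apply hv
  intro hc
  apply hi
  have hw : (↑w : Equiv.Perm (Fin n)) (lastE n hn) = lastE n hn := w.2
  have hc' : (↑w : Equiv.Perm (Fin n))⁻¹ (i (Fin.last r)) = lastE n hn := hc
  have h2 := congrArg (↑w : Equiv.Perm (Fin n)) hc'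
  rw [← Equiv.Perm.mul_apply, mul_inv_cancel, Equiv.Perm.one_apply, hw] at h2
  exact h2

theorem smul_mem_Hprime (k : Type) [CommRing k] (n : ℕ) (hn : 0 < n) (m : ℕ) (hm : m < n)
    (w : ↥(stabLast n hn)) (v : (Fin m → Fin n) → k)
    (hv : v ∈ Hprime k n m hm) : permEnd k n m ↑w v ∈ Hprime k n m hm := by
  rw [mem_Hprime] at hv ⊢
  intro u hu
  rw [permEnd_apply]
  apply hv
  intro hc
  apply hu
  have hw : (↑w : Equiv.Perm (Fin n)) (lastE n hn) = lastE n hn := w.2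
  exact (Pm_smul_iff n hn m ↑w hw u).mp hc

end Stmt10Aux

open Stmt10Aux

/-- As left `k[W_{n-1}]`-modules,
`V^{⊗r} ⊗ v_n ≅ ⨁_{l=1}^{min(n,r+1)} H_{n-1}(l-1)^{S(r+1,l)}`. -/
theorem stmt_10 (k : Type) [CommRing k] (n r : ℕ) (hn : 0 < n) :
    ∃ (hsrc : ∀ (w : ↥(stabLast n hn)) (v : (Fin (r + 1) → Fin n) → k),
        v ∈ lastSub k n r hn → permEnd k n (r + 1) ↑w v ∈ lastSub k n r hn)
      (hst : ∀ (m : ℕ) (hm : m < n) (w : ↥(stabLast n hn)) (v : (Fin m → Fin n) → k),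
        v ∈ Hprime k n m hm → permEnd k n m ↑w v ∈ Hprime k n m hm)
      (e : ↥(lastSub k n r hn) ≃ₗ[k]
        ((l : Fin (min n (r + 1))) → Fin (stirling (r + 1) (l.1 + 1)) →
          ↥(Hprime k n l.1 (by have := l.isLt; omega)))),
      ∀ (w : ↥(stabLast n hn)) (x : ↥(lastSub k n r hn))
        (l : Fin (min n (r + 1))) (j : Fin (stirling (r + 1) (l.1 + 1))),
        e ⟨permEnd k n (r + 1) ↑w ↑x, hsrc w ↑x x.2⟩ l j =
          ⟨permEnd k n l.1 ↑w ↑(e x l j),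
            hst l.1 (by have := l.isLt; omega) w ↑(e x l j) (e x l j).2⟩ := by
  classical
  refine ⟨fun w v hv => smul_mem_lastSub k n r hn w v hv,
    fun m hm w v hv => smul_mem_Hprime k n hn m hm w v hv,
    eEquiv k n r hn, ?_⟩
  intro w x l j
  apply Subtype.ext
  funext u
  have hw : (↑w : Equiv.Perm (Fin n)) (lastE n hn) = lastE n hn := w.2
  show (if h : Pm n hn l.1 u then
      (permEnd k n (r + 1) ↑w ↑x : (Fin (r+1) → Fin n) → k)
        (τ n r hn ⟨l, j, ⟨u, h⟩⟩).val else 0)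
    = (if h : Pm n hn l.1 (fun a => (↑w : Equiv.Perm (Fin n))⁻¹ (u a)) then
      (x : (Fin (r+1) → Fin n) → k)
        (τ n r hn ⟨l, j, ⟨fun a => (↑w : Equiv.Perm (Fin n))⁻¹ (u a), h⟩⟩).val else 0)
  by_cases h : Pm n hn l.1 u
  · rw [dif_pos h, dif_pos ((Pm_smul_iff n hn l.1 ↑w hw u).mpr h)]
    rw [permEnd_apply]
    exact congrArg (x : (Fin (r+1) → Fin n) → k)
      (funext (τ_smul n r hn ↑w hw l j u h))
  · rw [dif_neg h, dif_neg (fun hc => h ((Pm_smul_iff n hn l.1 ↑w hw u).mp hc))]
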